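/- For every j ≥ 0, the composition g_j∘Z satisfies, in ℝ[[v]]: αβ·(1−v³)·(g_j∘Z) = v^{j+1}·(α + αv² + vβ)·(vα+β). -/

import Mathlib

open PowerSeries Filter

noncomputable section

/-- Composition `h ∘ Z` of formal power series; this is the usual composition whenever
`Z` has zero constant term (then for each `n` only finitely many terms contribute). -/
def psComp (h Z : PowerSeries ℝ) : PowerSeries ℝ :=
  PowerSeries.mk fun n => ∑' k : ℕ, (PowerSeries.coeff k h) * (PowerSeries.coeff n (Z ^ k))

/-- The substitution series `Z = v · ((α+βv)(β+αv))⁻¹ ∈ ℝ[[v]]`; the inverse exists since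
the constant term `αβ` is nonzero, and `Z` has zero constant term. -/
def Zsub (α β : ℝ) : PowerSeries ℝ :=
  PowerSeries.X * (((PowerSeries.C α) + (PowerSeries.C β) * PowerSeries.X) *
    ((PowerSeries.C β) + (PowerSeries.C α) * PowerSeries.X))⁻¹

variable {Z : PowerSeries ℝ} (hZ : constantCoeff Z = 0)

lemma coeff_pow_zero (hZ : constantCoeff Z = 0) {n k : ℕ} (h : n < k) :
    coeff n (Z ^ k) = 0 := by
  have : (X : PowerSeries ℝ)^k ∣ Z ^ k := pow_dvd_pow_of_dvd (X_dvd_iff.2 hZ) k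
  exact X_pow_dvd_iff.1 this n h

lemma coeff_psComp (hZ : constantCoeff Z = 0) (h : PowerSeries ℝ) (n : ℕ) :
    coeff n (psComp h Z) =
      ∑ k ∈ Finset.range (n+1), coeff k h * coeff n (Z ^ k) := by
  rw [psComp, coeff_mk]
  refine tsum_eq_sum ?_
  intro k hk
  rw [coeff_pow_zero hZ (by simpa using hk), mul_zero]

lemma psComp_add (hZ : constantCoeff Z = 0) (h₁ h₂ : PowerSeries ℝ) :
    psComp (h₁ + h₂) Z = psComp h₁ Z + psComp h₂ Z := by
  ext n
  simp only [coeff_psComp hZ, map_add, add_mul, Finset.sum_add_distrib]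

lemma psComp_C_mul (hZ : constantCoeff Z = 0) (a : ℝ) (h : PowerSeries ℝ) :
    psComp (C a * h) Z = C a * psComp h Z := by
  ext n
  simp only [coeff_psComp hZ, coeff_C_mul, Finset.mul_sum, mul_assoc]

lemma psComp_one (hZ : constantCoeff Z = 0) : psComp 1 Z = 1 := by
  ext n
  rw [coeff_psComp hZ]
  simp [coeff_one]

lemma psComp_X_mul (hZ : constantCoeff Z = 0) (h : PowerSeries ℝ) :
    psComp (X * h) Z = Z * psComp h Z := by
  ext n
  rw [coeff_psComp hZ, Finset.sum_range_succ']
  simp only [coeff_succ_X_mul, coeff_zero_eq_constantCoeff, map_mul, hZ, zero_mul,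
    constantCoeff_X, mul_zero, add_zero]
  have step1 : ∀ k, coeff n (Z ^ (k+1)) =
      ∑ p ∈ Finset.HasAntidiagonal.antidiagonal n, coeff p.1 Z * coeff p.2 (Z ^ k) := by
    intro k; rw [pow_succ', coeff_mul]
  calc ∑ k ∈ Finset.range n, coeff k h * coeff n (Z ^ (k+1))
      = ∑ k ∈ Finset.range (n+1), coeff k h * coeff n (Z ^ (k+1)) := by
        rw [Finset.sum_range_succ, coeff_pow_zero hZ (Nat.lt_succ_self n), mul_zero, add_zero]
    _ = ∑ k ∈ Finset.range (n+1), ∑ p ∈ Finset.HasAntidiagonal.antidiagonal n,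
          coeff k h * (coeff p.1 Z * coeff p.2 (Z ^ k)) := by
        simp_rw [step1, Finset.mul_sum]
    _ = ∑ p ∈ Finset.HasAntidiagonal.antidiagonal n, ∑ k ∈ Finset.range (n+1),
          coeff k h * (coeff p.1 Z * coeff p.2 (Z ^ k)) := Finset.sum_comm
    _ = ∑ p ∈ Finset.HasAntidiagonal.antidiagonal n, coeff p.1 Z * coeff p.2 (psComp h Z) := by
        refine Finset.sum_congr rfl ?_
        intro p hp
        rw [coeff_psComp hZ, Finset.mul_sum]
        have hp2 : p.2 ≤ n := by
          rw [Finset.HasAntidiagonal.mem_antidiagonal] at hp; omega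
        rw [← Finset.sum_subset (Finset.range_subset_range.2 (by omega : p.2 + 1 ≤ n + 1))]
        · exact Finset.sum_congr rfl fun k _ => by ring
        · intro k _ hk
          rw [coeff_pow_zero hZ (by simp at hk ⊢; omega), mul_zero, mul_zero]
    _ = coeff n (Z * psComp h Z) := (coeff_mul n _ _).symm

lemma all_zero (H : ℕ → PowerSeries ℝ) (h0 : H 0 = 0)
    (hrec : ∀ N, (1 + X^2) * H (N+1) = X * (H N + H (N+2))) : ∀ N, H N = 0 := by
  have main : ∀ m N, coeff m (H N) = 0 := by
    intro m
    induction m using Nat.strong_induction_on with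
    | _ m ih =>
      intro N
      cases N with
      | zero => simp [h0]
      | succ N =>
        have h := congrArg (coeff m) (hrec N)
        rw [add_mul, one_mul, map_add, mul_add, map_add] at h
        match m with
        | 0 =>
          simp only [coeff_zero_eq_constantCoeff, map_mul, constantCoeff_X, zero_mul,
            map_pow, mul_zero, add_zero, zero_add] at h
          simpa using h
        | 1 =>
          have e1 : coeff 1 ((X:PowerSeries ℝ)^2 * H (N+1)) = 0 := by
            rw [coeff_X_pow_mul' (H (N+1)) 2 1]; simp
          rw [e1, add_zero, show (1:ℕ) = 0 + 1 from rfl, coeff_succ_X_mul,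
            coeff_succ_X_mul, ih 0 (by omega) N, ih 0 (by omega) (N+2)] at h
          simpa using h
        | (d+2) =>
          rw [show d+2 = d+2 from rfl, coeff_X_pow_mul (H (N+1)) 2 d,
            show d+2 = (d+1)+1 from rfl, coeff_succ_X_mul, coeff_succ_X_mul,
            ih d (by omega) (N+1), ih (d+1) (by omega) N, ih (d+1) (by omega) (N+2)] at h
          simpa using h
  intro N; ext m; simpa using main m N

/-- For every `j ≥ 0`: `αβ(1-v³)·(g_j∘Z) = v^{j+1}(α+αv²+vβ)(vα+β)`. -/
theorem twoStep_gj_substituted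
    (α β : ℝ) (hα0 : 0 < α) (hα1 : α < 1) (hβ : β = 1 - α)
    (f g : ℕ → PowerSeries ℝ) (fQ : PowerSeries ℝ)
    (hf : ∀ N : ℕ, f (N + 2) =
      C (α * β) * X * f (N + 1) + C (α * β) * X * f (N + 3)
        + C (α ^ 2 + β ^ 2) * X * f (N + 2))
    (hf1 : f 1 = C (α * β) * X * f 0 + C (α * β) * X * f 2
        + C (α ^ 2 + β ^ 2) * X * f 1 + C (β ^ 2) * X * fQ)
    (hf0 : f 0 = 1 + C (α * β) * X * f 1 + C (α ^ 2 + β ^ 2) * X * f 0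
        + C (α * β) * X * fQ)
    (hfQ : fQ = C (α * β) * X * g 0 + C (α ^ 2) * X * fQ)
    (hg : ∀ N : ℕ, g (N + 1) = C (α * β) * X * g N + C (α * β) * X * g (N + 2)
        + C (α ^ 2 + β ^ 2) * X * g (N + 1))
    (hg0 : g 0 = C (α * β) * X * f 0 + C (α * β) * X * g 1
        + C (α * β) * X * fQ + C (α ^ 2 + β ^ 2) * X * g 0)
    (hsupp : ∀ m N : ℕ, m < N → coeff m (f N) = 0 ∧ coeff m (g N) = 0) :
    ∀ j : ℕ, C (α * β) * (1 - X ^ 3) * psComp (g j) (Zsub α β) =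
      X ^ (j + 1) * (C α + C α * X ^ 2 + X * C β) * (X * C α + C β) := by
  have hβ0 : (0:ℝ) < β := by rw [hβ]; linarith
  have hA : (C α : PowerSeries ℝ) ≠ 0 := fun h0 => hα0.ne' (by simpa using congrArg (constantCoeff) h0)
  have hB : (C β : PowerSeries ℝ) ≠ 0 := fun h0 => hβ0.ne' (by simpa using congrArg (constantCoeff) h0)
  have hABX : (C α + C β * X : PowerSeries ℝ) ≠ 0 := by
    intro h0
    have := congrArg (constantCoeff) h0
    simp only [map_add, map_mul, constantCoeff_C, constantCoeff_X, mul_zero, add_zero, map_zero] at this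
    exact hα0.ne' this
  set Z := Zsub α β with hZdef
  have hZc : constantCoeff Z = 0 := by
    simp [hZdef, Zsub]
  have hZP : Z * ((C α + C β * X) * (C β + C α * X)) = X := by
    rw [hZdef, Zsub, mul_assoc, PowerSeries.inv_mul_cancel, mul_one]
    have : constantCoeff ((C α + C β * X) * (C β + C α * X)) = α * β := by
      simp
    rw [this]
    positivity
  have TC : ∀ (a : ℝ) (h : PowerSeries ℝ), psComp (C a * X * h) Z = C a * Z * psComp h Z := by
    intro a h
    rw [mul_assoc, psComp_C_mul hZc, psComp_X_mul hZc, mul_assoc]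
  -- transported equations
  have Eg : ∀ N, psComp (g (N+1)) Z = C (α*β) * Z * psComp (g N) Z
      + C (α*β) * Z * psComp (g (N+2)) Z + C (α^2+β^2) * Z * psComp (g (N+1)) Z := by
    intro N
    have := congrArg (fun h => psComp h Z) (hg N)
    simpa only [psComp_add hZc, TC] using this
  have Ef : ∀ N, psComp (f (N+2)) Z = C (α*β) * Z * psComp (f (N+1)) Z
      + C (α*β) * Z * psComp (f (N+3)) Z + C (α^2+β^2) * Z * psComp (f (N+2)) Z := by
    intro N
    have := congrArg (fun h => psComp h Z) (hf N)
    simpa only [psComp_add hZc, TC] using this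
  have E1 : psComp fQ Z = C (α*β) * Z * psComp (g 0) Z + C (α^2) * Z * psComp fQ Z := by
    have := congrArg (fun h => psComp h Z) hfQ
    simpa only [psComp_add hZc, TC] using this
  have E2 : psComp (g 0) Z = C (α*β) * Z * psComp (f 0) Z + C (α*β) * Z * psComp (g 1) Z
      + C (α*β) * Z * psComp fQ Z + C (α^2+β^2) * Z * psComp (g 0) Z := by
    have := congrArg (fun h => psComp h Z) hg0
    simpa only [psComp_add hZc, TC] using this
  have E3 : psComp (f 0) Z = 1 + C (α*β) * Z * psComp (f 1) Z
      + C (α^2+β^2) * Z * psComp (f 0) Z + C (α*β) * Z * psComp fQ Z := by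
    have := congrArg (fun h => psComp h Z) hf0
    simpa only [psComp_add hZc, TC, psComp_one hZc] using this
  have E4 : psComp (f 1) Z = C (α*β) * Z * psComp (f 0) Z + C (α*β) * Z * psComp (f 2) Z
      + C (α^2+β^2) * Z * psComp (f 1) Z + C (β^2) * Z * psComp fQ Z := by
    have := congrArg (fun h => psComp h Z) hf1
    simpa only [psComp_add hZc, TC] using this
  -- expand C of products
  simp only [map_mul, map_add, map_pow] at Eg Ef E1 E2 E3 E4
  -- three-term recurrences in v
  have hrelG : ∀ N, (1 + X^2) * psComp (g (N+1)) Z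
      = X * (psComp (g N) Z + psComp (g (N+2)) Z) := by
    intro N
    refine mul_left_cancel₀ (mul_ne_zero hA hB) ?_
    linear_combination ((C α + C β * X) * (C β + C α * X)) * Eg N
      + (C α * C β * (psComp (g N) Z + psComp (g (N+2)) Z)
        + ((C α)^2 + (C β)^2) * psComp (g (N+1)) Z) * hZP
  have hrelF : ∀ N, (1 + X^2) * psComp (f (N+2)) Z
      = X * (psComp (f (N+1)) Z + psComp (f (N+3)) Z) := by
    intro N
    refine mul_left_cancel₀ (mul_ne_zero hA hB) ?_
    linear_combination ((C α + C β * X) * (C β + C α * X)) * Ef N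
      + (C α * C β * (psComp (f (N+1)) Z + psComp (f (N+3)) Z)
        + ((C α)^2 + (C β)^2) * psComp (f (N+2)) Z) * hZP
  have hGpow : ∀ N, psComp (g N) Z = X^N * psComp (g 0) Z := by
    have h0 := all_zero (fun N => psComp (g N) Z - X^N * psComp (g 0) Z)
      (by simp) (fun N => by linear_combination hrelG N)
    intro N
    have := h0 N
    simp only [sub_eq_zero] at this
    exact this
  have hFpow : ∀ N, psComp (f (N+1)) Z = X^N * psComp (f 1) Z := by
    have h0 := all_zero (fun N => psComp (f (N+1)) Z - X^N * psComp (f 1) Z)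
      (by simp) (fun N => by linear_combination hrelF N)
    intro N
    have := h0 N
    simp only [sub_eq_zero] at this
    exact this
  have hG1 : psComp (g 1) Z = X * psComp (g 0) Z := by simpa using hGpow 1
  have hF2 : psComp (f 2) Z = X * psComp (f 1) Z := by simpa using hFpow 1
  -- solve the linear system
  have hG0 : psComp (g 0) Z = X * (psComp (f 0) Z + psComp fQ Z) := by
    refine mul_left_cancel₀ (mul_ne_zero hA hB) ?_
    linear_combination ((C α + C β * X) * (C β + C α * X)) * E2
      + (C α * C β * (psComp (f 0) Z + psComp (g 1) Z + psComp fQ Z)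
        + ((C α)^2 + (C β)^2) * psComp (g 0) Z) * hZP
      + (C α * C β * X) * hG1
  have hFQ : psComp fQ Z * (C α + C β * X) = C α * X^2 * psComp (f 0) Z := by
    refine mul_left_cancel₀ hB ?_
    linear_combination ((C α + C β * X) * (C β + C α * X)) * E1
      + (C α * C β * psComp (g 0) Z + (C α)^2 * psComp fQ Z) * hZP
      + (C α * C β * X) * hG0
  have hF1c : C α * psComp (f 1) Z
      = C α * X * psComp (f 0) Z + C β * X * psComp fQ Z := by
    refine mul_left_cancel₀ hB ?_
    linear_combination ((C α + C β * X) * (C β + C α * X)) * E4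
      + (C α * C β * (psComp (f 0) Z + psComp (f 2) Z)
        + ((C α)^2 + (C β)^2) * psComp (f 1) Z
        + (C β)^2 * psComp fQ Z) * hZP
      + (C α * C β * X) * hF2
  have hF0e : C α * C β * (1 + X^2) * psComp (f 0) Z
      = (C α + C β * X) * (C β + C α * X)
        + C α * C β * X * (psComp (f 1) Z + psComp fQ Z) := by
    linear_combination ((C α + C β * X) * (C β + C α * X)) * E3
      + (C α * C β * (psComp (f 1) Z + psComp fQ Z)
        + ((C α)^2 + (C β)^2) * psComp (f 0) Z) * hZP
  have hF0 : C α * C β * (1 - X^3) * psComp (f 0) Z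
      = (C α + C β * X) * (C β + C α * X) := by
    refine mul_left_cancel₀ (mul_ne_zero hA hABX) ?_
    linear_combination (C α * (C α + C β * X)) * hF0e
      + (C α * C β * X * (C α + C β * X)) * hF1c
      + (C α * C β * X * (C α + C β * X)) * hFQ
  have base : C α * C β * (1 - X^3) * psComp (g 0) Z
      = X * (C α + C α * X^2 + X * C β) * (X * C α + C β) := by
    refine mul_left_cancel₀ hABX ?_
    linear_combination ((C α + C β * X) * (C α * C β) * (1 - X^3)) * hG0
      + (C α * C β * X * (1 - X^3)) * hFQ
      + (X * (C α + C β * X + C α * X^2)) * hF0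
  intro j
  rw [hGpow j]
  have hCab : C (α*β) = C α * C β := map_mul _ _ _
  linear_combination (X^j) * base
    + ((1 - X^3) * (X^j * psComp (g 0) Z)) * hCab
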